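/- Let X and Y be real Banach spaces and A : X → Y a bounded linear operator. Let (r_n) be a sequence of norms on Y for which there exists C ≥ 1 with C⁻¹‖y‖ ≤ r_n(y) ≤ C‖y‖ for all n and all y ∈ Y, and let (ε_n) be positive reals with Σ_n ε_n ≤ 1; set r = Σ_n ε_n r_n. If for every n the operator A : X → (Y, r_n) is asymptotically uniformly smooth (for every τ > 0 there exists σ₀ > 0 such that for every 0 < σ ≤ σ₀, every y with r_n(y) ≤ 1, and every weakly null net (x_λ) ⊆ B_X, limsup_λ r_n(y + σ A x_λ) ≤ 1 + στ), then A : X → (Y, r) is asymptotically uniformly smooth (the same condition with r in place of r_n). -/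

import Mathlib

open Filter Topology Pointwise NormedSpace

noncomputable section

variable {X Y : Type*} [NormedAddCommGroup X] [NormedSpace ℝ X] [CompleteSpace X]
  [NormedAddCommGroup Y] [NormedSpace ℝ Y] [CompleteSpace Y]

/-- The adjoint `A* : Y* → X*` of a bounded linear operator, `(A* g)(x) = g (A x)`. -/
def opAdjoint (A : X →L[ℝ] Y) : StrongDual ℝ Y →L[ℝ] StrongDual ℝ X :=
  (ContinuousLinearMap.compSL X Y ℝ (RingHom.id ℝ) (RingHom.id ℝ)).flip A

/-- `r` is a norm on `E` that is `C`-equivalent to the original norm: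
`C⁻¹‖u‖ ≤ r u ≤ C‖u‖`. -/
def IsEquivNorm {E : Type*} [NormedAddCommGroup E] [NormedSpace ℝ E]
    (C : ℝ) (r : E → ℝ) : Prop :=
  (∀ u v : E, r (u + v) ≤ r u + r v) ∧ (∀ (a : ℝ) (u : E), r (a • u) = |a| * r u) ∧
    ∀ u : E, C⁻¹ * ‖u‖ ≤ r u ∧ r u ≤ C * ‖u‖

/-- limsup of a nonnegative bounded function times a nonnegative constant. -/
private lemma aux_limsup_const_mul {ι : Type*} {l : Filter ι} [l.NeBot] {g : ι → ℝ}
    {c L M : ℝ} (hc : 0 ≤ c) (hg0 : ∀ i, 0 ≤ g i) (hgM : ∀ i, g i ≤ M)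
    (hL : limsup g l ≤ L) :
    limsup (fun i => c * g i) l ≤ c * L := by
  have h := limsup_mul_le (f := l) (u := fun _ => c) (v := g)
    (Eventually.of_forall fun _ => hc).frequently
    (isBoundedUnder_of ⟨c, fun _ => le_rfl⟩)
    (Eventually.of_forall hg0)
    (isBoundedUnder_of ⟨M, hgM⟩)
  rw [limsup_const] at h
  have h' : limsup (fun i => c * g i) l ≤ c * limsup g l := h
  exact h'.trans (mul_le_mul_of_nonneg_left hL hc)

/-- limsup of a bounded function plus a constant. -/
private lemma aux_limsup_add_const {ι : Type*} {l : Filter ι} [l.NeBot] {g : ι → ℝ}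
    {c m M : ℝ} (h0 : ∀ i, m ≤ g i) (hM : ∀ i, g i ≤ M) :
    limsup (fun i => g i + c) l ≤ limsup g l + c := by
  have h := limsup_add_le (f := l) (u := g) (v := fun _ => c)
    (isBoundedUnder_of ⟨m, fun i => h0 i⟩)
    (isBoundedUnder_of ⟨M, hM⟩)
    ((isBoundedUnder_of (r := (· ≥ ·)) ⟨c, fun _ => le_rfl⟩).isCoboundedUnder_le)
    (isBoundedUnder_of ⟨c, fun _ => le_rfl⟩)
  rw [limsup_const] at h
  exact h

/-- limsup of a finite sum of nonnegative bounded functions. -/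
private lemma aux_limsup_sum {ι : Type*} {l : Filter ι} [l.NeBot] (S : Finset ℕ)
    (F : ℕ → ι → ℝ) (b : ℕ → ℝ) (M : ℕ → ℝ)
    (h0 : ∀ n i, 0 ≤ F n i) (hM : ∀ n i, F n i ≤ M n)
    (hF : ∀ n ∈ S, limsup (F n) l ≤ b n) :
    limsup (fun i => ∑ n ∈ S, F n i) l ≤ ∑ n ∈ S, b n := by
  classical
  induction S using Finset.induction_on with
  | empty =>
      simp only [Finset.sum_empty]
      exact le_of_eq (limsup_const 0)
  | @insert a S ha ih =>
      have hb : limsup (F a) l ≤ b a := hF a (Finset.mem_insert_self _ _)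
      have hrest := ih (fun n hn => hF n (Finset.mem_insert_of_mem hn))
      rw [Finset.sum_insert ha]
      have hfun : (fun i => ∑ n ∈ insert a S, F n i)
          = F a + fun i => ∑ n ∈ S, F n i := by
        funext i
        simp [Finset.sum_insert ha]
      rw [hfun]
      have h1 : IsBoundedUnder (· ≥ ·) l (F a) :=
        isBoundedUnder_of ⟨0, fun i => h0 a i⟩
      have h2 : IsBoundedUnder (· ≤ ·) l (F a) :=
        isBoundedUnder_of ⟨M a, fun i => hM a i⟩
      have h3 : IsCoboundedUnder (· ≤ ·) l (fun i => ∑ n ∈ S, F n i) :=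
        (isBoundedUnder_of (r := (· ≥ ·))
          ⟨0, fun i => Finset.sum_nonneg fun n _ => h0 n i⟩).isCoboundedUnder_le
      have h4 : IsBoundedUnder (· ≤ ·) l (fun i => ∑ n ∈ S, F n i) :=
        isBoundedUnder_of ⟨∑ n ∈ S, M n, fun i => Finset.sum_le_sum fun n _ => hM n i⟩
      exact (limsup_add_le h1 h2 h3 h4).trans (add_le_add hb hrest)

set_option maxHeartbeats 2000000 in
/-- Proposition 5.6(i) of the paper, case ξ = 0: asymptotic uniform
smoothness of `A : X → (Y, r_n)` for each `n` passes to the averaged norm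
`r = Σ_n ε_n r_n`. -/
theorem statement18 (A : X →L[ℝ] Y) (rn : ℕ → Y → ℝ) (C : ℝ) (hC : 1 ≤ C)
    (hrn : ∀ n, IsEquivNorm C (rn n))
    (ε : ℕ → ℝ) (hεpos : ∀ n, 0 < ε n) (hsum : Summable ε)
    (hsum1 : (∑' n, ε n) ≤ 1)
    (hAUS : ∀ n : ℕ, ∀ τ : ℝ, 0 < τ → ∃ σ₀ : ℝ, 0 < σ₀ ∧ ∀ σ : ℝ, 0 < σ → σ ≤ σ₀ →
      ∀ y : Y, rn n y ≤ 1 →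
        ∀ (ι : Type u) [Preorder ι] [IsDirected ι (· ≤ ·)] [Nonempty ι],
          ∀ x : ι → X, (∀ i, ‖x i‖ ≤ 1) →
            (∀ f : StrongDual ℝ X, Tendsto (fun i => f (x i)) atTop (𝓝 0)) →
            limsup (fun i => rn n (y + σ • A (x i))) atTop ≤ 1 + σ * τ) :
    ∀ τ : ℝ, 0 < τ → ∃ σ₀ : ℝ, 0 < σ₀ ∧ ∀ σ : ℝ, 0 < σ → σ ≤ σ₀ →
      ∀ y : Y, (∑' n, ε n * rn n y) ≤ 1 →
        ∀ (ι : Type u) [Preorder ι] [IsDirected ι (· ≤ ·)] [Nonempty ι],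
          ∀ x : ι → X, (∀ i, ‖x i‖ ≤ 1) →
            (∀ f : StrongDual ℝ X, Tendsto (fun i => f (x i)) atTop (𝓝 0)) →
            limsup (fun i => ∑' n, ε n * rn n (y + σ • A (x i))) atTop ≤ 1 + σ * τ := by
  classical
  intro τ hτ
  have hCpos : (0:ℝ) < C := lt_of_lt_of_le one_pos hC
  have hnA : (0:ℝ) ≤ ‖A‖ := norm_nonneg _
  have hr0 : ∀ n (u : Y), 0 ≤ rn n u := fun n u =>
    le_trans (by positivity) ((hrn n).2.2 u).1
  have hub : ∀ n (u : Y), rn n u ≤ C * ‖u‖ := fun n u => ((hrn n).2.2 u).2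
  have hlb : ∀ n (u : Y), C⁻¹ * ‖u‖ ≤ rn n u := fun n u => ((hrn n).2.2 u).1
  have hsub : ∀ n (u v : Y), rn n (u + v) ≤ rn n u + rn n v := fun n => (hrn n).1
  have hhom : ∀ n (a : ℝ) (u : Y), rn n (a • u) = |a| * rn n u := fun n => (hrn n).2.1
  have hsummable : ∀ u : Y, Summable (fun n => ε n * rn n u) := by
    intro u
    exact Summable.of_nonneg_of_le (fun n => mul_nonneg (hεpos n).le (hr0 n u))
      (fun n => mul_le_mul_of_nonneg_left (hub n u) (hεpos n).le)
      (hsum.mul_right (C * ‖u‖))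
  set δ : ℝ := τ / (2 * (C * ‖A‖ + 1)) with hδdef
  have hδpos : 0 < δ := by positivity
  have hδeq : δ * (2 * (C * ‖A‖ + 1)) = τ := by
    rw [hδdef]; field_simp
  obtain ⟨N, hN⟩ : ∃ N, ∑' k, ε (k + N) ≤ δ := by
    have h := (tendsto_sum_nat_add ε).eventually_lt_const hδpos
    obtain ⟨N, hN⟩ := h.exists
    exact ⟨N, hN.le⟩
  choose s hs0 hs using fun n => hAUS n (τ / 2) (by positivity)
  set σm : ℝ := (Finset.range (N + 1)).inf'
    (Finset.nonempty_range_iff.mpr (Nat.succ_ne_zero N)) s with hσmdef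
  have hσmpos : 0 < σm := by
    rw [hσmdef]
    exact (Finset.lt_inf'_iff _).mpr fun i _ => hs0 i
  have hσmle : ∀ n, n < N → σm ≤ s n := fun n hn =>
    Finset.inf'_le _ (Finset.mem_range.mpr (Nat.lt_succ_of_lt hn))
  set γ : ℝ := C / σm with hγdef
  have hγpos : 0 < γ := by positivity
  refine ⟨(C * (γ + ‖A‖) + 1)⁻¹, by positivity, ?_⟩
  intro σ hσ hσle y hy ι _ _ _ x hx hweak
  haveI : (atTop : Filter ι).NeBot := atTop_neBot
  have hAxi : ∀ i, ‖A (x i)‖ ≤ ‖A‖ := by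
    intro i
    calc ‖A (x i)‖ ≤ ‖A‖ * ‖x i‖ := A.le_opNorm _
    _ ≤ ‖A‖ * 1 := mul_le_mul_of_nonneg_left (hx i) hnA
    _ = ‖A‖ := mul_one _
  have hboundgen : ∀ n (z : Y) (a : ℝ), 0 < a →
      ∀ i, rn n (z + a • A (x i)) ≤ C * (‖z‖ + a * ‖A‖) := by
    intro n z a ha i
    calc rn n (z + a • A (x i)) ≤ C * ‖z + a • A (x i)‖ := hub n _
    _ ≤ C * (‖z‖ + a * ‖A‖) := by
        refine mul_le_mul_of_nonneg_left ?_ hCpos.le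
        calc ‖z + a • A (x i)‖ ≤ ‖z‖ + ‖a • A (x i)‖ := norm_add_le _ _
        _ = ‖z‖ + a * ‖A (x i)‖ := by rw [norm_smul, Real.norm_eq_abs, abs_of_pos ha]
        _ ≤ ‖z‖ + a * ‖A‖ := by nlinarith [hAxi i]
  have hbound : ∀ n i, rn n (y + σ • A (x i)) ≤ C * (‖y‖ + σ * ‖A‖) :=
    fun n i => hboundgen n y σ hσ i
  have hF0 : ∀ i, (0:ℝ) ≤ ∑' n, ε n * rn n (y + σ • A (x i)) := fun i =>
    tsum_nonneg fun n => mul_nonneg (hεpos n).le (hr0 n _)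
  by_cases hcase : ‖y‖ ≤ σ * γ
  · -- small `y`: everything is bounded by `1`.
    have h1 : ∀ i, (∑' n, ε n * rn n (y + σ • A (x i))) ≤ 1 := by
      intro i
      have hle : ∀ n, ε n * rn n (y + σ • A (x i)) ≤ ε n := by
        intro n
        have hK : (0:ℝ) ≤ C * (γ + ‖A‖) := by positivity
        have hrle1 : rn n (y + σ • A (x i)) ≤ 1 := by
          refine le_trans (hbound n i) ?_
          have h3 : C * (‖y‖ + σ * ‖A‖) ≤ σ * (C * (γ + ‖A‖)) := by nlinarith
          have h4 : σ * (C * (γ + ‖A‖)) ≤ (C * (γ + ‖A‖) + 1)⁻¹ * (C * (γ + ‖A‖)) :=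
            mul_le_mul_of_nonneg_right hσle hK
          have h5 : (C * (γ + ‖A‖) + 1)⁻¹ * (C * (γ + ‖A‖)) ≤ 1 := by
            rw [inv_mul_le_iff₀ (by positivity)]
            linarith
          linarith
        nlinarith [(hεpos n).le]
      calc (∑' n, ε n * rn n (y + σ • A (x i))) ≤ ∑' n, ε n :=
        Summable.tsum_le_tsum hle (hsummable _) hsum
      _ ≤ 1 := hsum1
    refine le_trans (limsup_le_of_le ?_ (Eventually.of_forall h1)) (by nlinarith)
    exact (isBoundedUnder_of (r := (· ≥ ·)) ⟨0, hF0⟩).isCoboundedUnder_le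
  · push_neg at hcase
    have htlb : ∀ n, σ / σm < rn n y := by
      intro n
      have h2 : σ / σm = C⁻¹ * (σ * γ) := by
        rw [hγdef]; field_simp
      rw [h2]
      calc C⁻¹ * (σ * γ) < C⁻¹ * ‖y‖ :=
        mul_lt_mul_of_pos_left hcase (by positivity)
      _ ≤ rn n y := hlb n y
    have htpos : ∀ n, 0 < rn n y := fun n => lt_trans (by positivity) (htlb n)
    -- the per-index estimate for `n < N`
    have hper : ∀ n, n < N →
        limsup (fun i => ε n * rn n (y + σ • A (x i))) atTop
          ≤ ε n * (rn n y + σ * (τ / 2)) := by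
      intro n hn
      set t : ℝ := rn n y with htdef
      have htp : 0 < t := htpos n
      set σ' : ℝ := σ / t with hσ'def
      have hσ'pos : 0 < σ' := div_pos hσ htp
      have hσ'le : σ' ≤ s n := by
        have hlt : σ' < σm := by
          rw [hσ'def, div_lt_iff₀ htp]
          have h6 := htlb n
          rw [div_lt_iff₀ hσmpos] at h6
          rw [← htdef] at h6
          nlinarith
        exact hlt.le.trans (hσmle n hn)
      set y' : Y := t⁻¹ • y with hy'def
      have hy'1 : rn n y' ≤ 1 := by
        rw [hy'def, hhom n, abs_of_pos (by positivity), ← htdef,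
          inv_mul_cancel₀ htp.ne']
      have hls := hs n σ' hσ'pos hσ'le y' hy'1 ι x hx hweak
      have hid : ∀ i, rn n (y + σ • A (x i)) = t * rn n (y' + σ' • A (x i)) := by
        intro i
        have hvec : y + σ • A (x i) = t • (y' + σ' • A (x i)) := by
          rw [hy'def, hσ'def, smul_add, smul_smul, smul_smul,
            mul_inv_cancel₀ htp.ne', one_smul, mul_div_cancel₀ _ htp.ne']
        rw [hvec, hhom n, abs_of_pos htp]
      have hfun : (fun i => ε n * rn n (y + σ • A (x i)))
          = fun i => (ε n * t) * rn n (y' + σ' • A (x i)) := by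
        funext i; rw [hid i]; ring
      rw [hfun]
      have haux := aux_limsup_const_mul (l := (atTop : Filter ι))
        (c := ε n * t) (g := fun i => rn n (y' + σ' • A (x i)))
        (L := 1 + σ' * (τ / 2)) (M := C * (‖y'‖ + σ' * ‖A‖))
        (mul_nonneg (hεpos n).le htp.le)
        (fun i => hr0 n _)
        (fun i => hboundgen n y' σ' hσ'pos i) hls
      refine haux.trans (le_of_eq ?_)
      rw [hσ'def]
      field_simp
    -- tail estimates
    set c : ℝ := σ * (C * ‖A‖) with hcdef
    have hc0 : (0:ℝ) ≤ c := by positivity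
    have htail : ∀ i k, ε (k + N) * rn (k + N) (y + σ • A (x i))
        ≤ ε (k + N) * rn (k + N) y + ε (k + N) * c := by
      intro i k
      have h1 : rn (k + N) (y + σ • A (x i)) ≤ rn (k + N) y + c := by
        refine le_trans (hsub _ y (σ • A (x i))) ?_
        have h2 : rn (k + N) (σ • A (x i)) ≤ c := by
          rw [hhom, abs_of_pos hσ, hcdef]
          have h3 := hub (k + N) (A (x i))
          have h5 : rn (k + N) (A (x i)) ≤ C * ‖A‖ :=
            h3.trans (mul_le_mul_of_nonneg_left (hAxi i) hCpos.le)
          exact mul_le_mul_of_nonneg_left h5 hσ.le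
        linarith
      nlinarith [(hεpos (k + N)).le]
    have hsummA : ∀ u : Y, Summable (fun k => ε (k + N) * rn (k + N) u) := fun u =>
      (summable_nat_add_iff (f := fun n => ε n * rn n u) N).mpr (hsummable u)
    have hsummc : Summable (fun k => ε (k + N) * c) :=
      (summable_nat_add_iff (f := fun n => ε n * c) N).mpr (hsum.mul_right c)
    have hTt : ∀ i, (∑' k, ε (k + N) * rn (k + N) (y + σ • A (x i)))
        ≤ (∑' k, ε (k + N) * rn (k + N) y) + δ * c := by
      intro i
      calc (∑' k, ε (k + N) * rn (k + N) (y + σ • A (x i)))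
          ≤ ∑' k, (ε (k + N) * rn (k + N) y + ε (k + N) * c) :=
            Summable.tsum_le_tsum (htail i) (hsummA _) ((hsummA y).add hsummc)
      _ = (∑' k, ε (k + N) * rn (k + N) y) + (∑' k, ε (k + N)) * c := by
            rw [Summable.tsum_add (hsummA y) hsummc, tsum_mul_right]
      _ ≤ (∑' k, ε (k + N) * rn (k + N) y) + δ * c := by
            have := mul_le_mul_of_nonneg_right hN hc0
            linarith
    set K : ℝ := (∑' k, ε (k + N) * rn (k + N) y) + δ * c with hKdef
    have hdec : ∀ i, (∑' n, ε n * rn n (y + σ • A (x i)))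
        ≤ (∑ n ∈ Finset.range N, ε n * rn n (y + σ • A (x i))) + K := by
      intro i
      rw [← Summable.sum_add_tsum_nat_add (f := fun n => ε n * rn n (y + σ • A (x i))) N
        (hsummable _)]
      exact add_le_add_right (hTt i) _
    have hG : limsup (fun i => ∑ n ∈ Finset.range N, ε n * rn n (y + σ • A (x i))) atTop
        ≤ ∑ n ∈ Finset.range N, ε n * (rn n y + σ * (τ / 2)) :=
      aux_limsup_sum (Finset.range N)
        (fun n i => ε n * rn n (y + σ • A (x i)))
        (fun n => ε n * (rn n y + σ * (τ / 2)))
        (fun n => ε n * (C * (‖y‖ + σ * ‖A‖)))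
        (fun n i => mul_nonneg (hεpos n).le (hr0 n _))
        (fun n i => mul_le_mul_of_nonneg_left (hbound n i) (hεpos n).le)
        (fun n hn => hper n (Finset.mem_range.mp hn))
    have hGM : ∀ i, (∑ n ∈ Finset.range N, ε n * rn n (y + σ • A (x i)))
        ≤ ∑ n ∈ Finset.range N, ε n * (C * (‖y‖ + σ * ‖A‖)) := fun i =>
      Finset.sum_le_sum fun n _ => mul_le_mul_of_nonneg_left (hbound n i) (hεpos n).le
    have hG0 : ∀ i, (0:ℝ) ≤ ∑ n ∈ Finset.range N, ε n * rn n (y + σ • A (x i)) :=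
      fun i => Finset.sum_nonneg fun n _ => mul_nonneg (hεpos n).le (hr0 n _)
    have step1 : limsup (fun i => ∑' n, ε n * rn n (y + σ • A (x i))) atTop
        ≤ limsup (fun i => (∑ n ∈ Finset.range N, ε n * rn n (y + σ • A (x i))) + K)
            atTop := by
      refine limsup_le_limsup (Eventually.of_forall hdec) ?_ ?_
      · exact (isBoundedUnder_of (r := (· ≥ ·)) ⟨0, hF0⟩).isCoboundedUnder_le
      · exact isBoundedUnder_of
          ⟨(∑ n ∈ Finset.range N, ε n * (C * (‖y‖ + σ * ‖A‖))) + K,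
            fun i => add_le_add_left (hGM i) K⟩
    have step2 : limsup (fun i => (∑ n ∈ Finset.range N,
          ε n * rn n (y + σ • A (x i))) + K) atTop
        ≤ limsup (fun i => ∑ n ∈ Finset.range N, ε n * rn n (y + σ • A (x i))) atTop
          + K :=
      aux_limsup_add_const hG0 hGM
    -- final arithmetic
    have hsplit : (∑ n ∈ Finset.range N, ε n * rn n y)
        + (∑' k, ε (k + N) * rn (k + N) y) = ∑' n, ε n * rn n y :=
      Summable.sum_add_tsum_nat_add (f := fun n => ε n * rn n y) N (hsummable y)
    have hεrange : (∑ n ∈ Finset.range N, ε n) ≤ 1 :=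
      le_trans (Summable.sum_le_tsum (Finset.range N) (fun n _ => (hεpos n).le) hsum) hsum1
    have hsum_expand : (∑ n ∈ Finset.range N, ε n * (rn n y + σ * (τ / 2)))
        = (∑ n ∈ Finset.range N, ε n * rn n y)
          + (∑ n ∈ Finset.range N, ε n) * (σ * (τ / 2)) := by
      simp only [mul_add]
      rw [Finset.sum_add_distrib, Finset.sum_mul]
    have hδc : δ * c ≤ σ * (τ / 2) := by
      have h9 : δ * (C * ‖A‖) ≤ τ / 2 := by nlinarith [hδeq, hδpos]
      calc δ * c = σ * (δ * (C * ‖A‖)) := by rw [hcdef]; ring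
      _ ≤ σ * (τ / 2) := mul_le_mul_of_nonneg_left h9 hσ.le
    have hστ2 : (0:ℝ) ≤ σ * (τ / 2) := by positivity
    calc limsup (fun i => ∑' n, ε n * rn n (y + σ • A (x i))) atTop
        ≤ limsup (fun i => ∑ n ∈ Finset.range N, ε n * rn n (y + σ • A (x i))) atTop
          + K := step1.trans step2
    _ ≤ (∑ n ∈ Finset.range N, ε n * (rn n y + σ * (τ / 2))) + K :=
        add_le_add_left hG K
    _ ≤ 1 + σ * τ := by
        rw [hKdef, hsum_expand]
        have h7 : (∑ n ∈ Finset.range N, ε n) * (σ * (τ / 2)) ≤ σ * (τ / 2) := by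
          nlinarith [Finset.sum_nonneg (s := Finset.range N)
            (f := ε) (fun n _ => (hεpos n).le)]
        have h8 : (∑ n ∈ Finset.range N, ε n * rn n y)
            + (∑' k, ε (k + N) * rn (k + N) y) ≤ 1 := hsplit.le.trans hy
        linarith
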